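/- Let X be a set, M a commutative monoid of transformations of X, and ≿ a strongly M-invariant preorder on X. If ≿ is maximal (with respect to the extension order) among strongly M-invariant preorders on X, then ≿ is complete. -/

import Mathlib

/-- Helper: a cycle in a relation yields a periodic ℕ-indexed chain. -/
lemma cycle_periodic {F : Type*} (L : F → F → Prop) (a b : F)
    (h : Relation.ReflTransGen L a b) (hba : L b a) :
    ∃ n, 1 ≤ n ∧ ∃ f : ℕ → F, f 0 = b ∧ f 1 = a ∧ (∀ i, L (f i) (f (i+1))) ∧
      (∀ i, f (i+n) = f i) := by
  classical
  obtain ⟨l, hchain, hlast⟩ := List.exists_isChain_cons_of_relationReflTransGen h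
  set c : List F := a :: l with hc
  set n : ℕ := c.length with hn
  have hn1 : 1 ≤ n := by simp [hn, hc]
  have hchain' : List.Chain' L c := hchain
  have hc0 : c.getD 0 a = a := by simp [hc]
  have hclast : c.getD (n-1) a = b := by
    rw [List.getD_eq_getElem c a (by omega)]
    rw [← List.getLast_eq_getElem (l := c) (by simp [hc])]
    exact hlast
  have hlink : ∀ j, L (c.getD (j % n) a) (c.getD ((j+1) % n) a) := by
    intro j
    have hj : j % n < n := Nat.mod_lt _ (by omega)
    rcases Nat.lt_or_ge (j % n + 1) n with hlt | hge
    · have e : (j+1) % n = j % n + 1 := by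
        rw [Nat.add_mod, Nat.mod_eq_of_lt (show (1:ℕ) < n by omega),
          Nat.mod_eq_of_lt hlt]
      rw [e, List.getD_eq_getElem c a (by omega), List.getD_eq_getElem c a (by omega)]
      have := List.isChain_iff_getElem.mp hchain' (j % n) (by omega)
      simpa using this
    · have ej : j % n = n - 1 := by omega
      have e : (j+1) % n = 0 := by
        rw [← Nat.mod_add_mod, ej, show n - 1 + 1 = n by omega, Nat.mod_self]
      rw [e, ej, hc0, hclast]
      exact hba
  refine ⟨n, hn1, fun i => c.getD ((i + (n-1)) % n) a, ?_, ?_, ?_, ?_⟩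
  · show c.getD ((0 + (n-1)) % n) a = b
    rw [show (0 + (n-1)) % n = n - 1 from by rw [Nat.zero_add, Nat.mod_eq_of_lt (by omega)]]
    exact hclast
  · show c.getD ((1 + (n-1)) % n) a = a
    rw [show (1 + (n-1)) % n = 0 from by rw [show 1 + (n-1) = n by omega, Nat.mod_self]]
    exact hc0
  · intro i
    show L (c.getD ((i + (n-1)) % n) a) (c.getD ((i + 1 + (n-1)) % n) a)
    rw [show i + 1 + (n-1) = (i + (n-1)) + 1 by omega]
    exact hlink (i + (n-1))
  · intro i
    show c.getD ((i + n + (n-1)) % n) a = c.getD ((i + (n-1)) % n) a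
    rw [show i + n + (n-1) = (i + (n-1)) + n by omega, Nat.add_mod_right]

/-- For a commutative monoid M of transformations, a strongly M-invariant
preorder that is maximal (w.r.t. the extension order) among strongly M-invariant
preorders is complete. -/
theorem stmt_17 {X : Type*} (M : Set (X → X))
    (hid : id ∈ M) (hcomp : ∀ ω ∈ M, ∀ ω' ∈ M, ω ∘ ω' ∈ M)
    (hcomm : ∀ ω ∈ M, ∀ ω' ∈ M, ω ∘ ω' = ω' ∘ ω)
    (r : X → X → Prop) (hrefl : ∀ x, r x x)
    (htrans : ∀ x y z, r x y → r y z → r x z)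
    (hsinv : ∀ ω ∈ M, ∀ x y, (r x y ↔ r (ω x) (ω y)) ∧
      ((r x y ∧ ¬ r y x) ↔ (r (ω x) (ω y) ∧ ¬ r (ω y) (ω x))))
    (hmax : ∀ r' : X → X → Prop,
      (∀ x, r' x x) → (∀ x y z, r' x y → r' y z → r' x z) →
      (∀ ω ∈ M, ∀ x y, (r' x y ↔ r' (ω x) (ω y)) ∧
        ((r' x y ∧ ¬ r' y x) ↔ (r' (ω x) (ω y) ∧ ¬ r' (ω y) (ω x)))) →
      (∀ x y, r x y → r' x y) → (∀ x y, r x y → ¬ r y x → r' x y ∧ ¬ r' y x) →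
      ∀ x y, r' x y ↔ r x y) :
    ∀ x y, r x y ∨ r y x := by
  classical
  by_contra hcon
  push_neg at hcon
  obtain ⟨x₀, y₀, hxy, hyx⟩ := hcon
  -- KEY: for any incomparable-direction pair (u,v) with ¬ r u v, maximality forces the
  -- existence of a periodic "cyclic system" of witnesses in M.
  have key : ∀ u v : X, ¬ r u v →
      ∃ n, 1 ≤ n ∧ ∃ g : ℕ → X → X, (∀ i, g i ∈ M) ∧ (∀ i, r (g i v) (g (i+1) u)) ∧
        (∀ i, g (i+n) = g i) ∧ ¬ r (g 1 u) (g 0 v) := by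
    intro u v huv
    set step : X → X → Prop := fun a b => r a b ∨ ∃ ω, ω ∈ M ∧ a = ω u ∧ b = ω v with hstepdef
    set Reach : X → X → Prop := Relation.ReflTransGen step with hReachdef
    have hmapstep : ∀ τ, τ ∈ M → ∀ a b, step a b → step (τ a) (τ b) := by
      intro τ hτ a b hab
      rcases hab with h | ⟨ω, hω, ha, hb⟩
      · exact Or.inl (((hsinv τ hτ a b).1).mp h)
      · exact Or.inr ⟨τ ∘ ω, hcomp τ hτ ω hω, by simp [ha], by simp [hb]⟩
    have hmap : ∀ τ, τ ∈ M → ∀ a b, Reach a b → Reach (τ a) (τ b) := by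
      intro τ hτ a b hab
      induction hab with
      | refl => exact Relation.ReflTransGen.refl
      | tail _ hbc ih => exact ih.tail (hmapstep τ hτ _ _ hbc)
    set r' : X → X → Prop := fun a b => ∃ ρ, ρ ∈ M ∧ Reach (ρ a) (ρ b) with hr'def
    have hr'refl : ∀ x, r' x x := fun x => ⟨id, hid, Relation.ReflTransGen.refl⟩
    have hr'trans : ∀ a b c, r' a b → r' b c → r' a c := by
      rintro a b c ⟨ρ, hρ, h1⟩ ⟨σ, hσ, h2⟩
      refine ⟨σ ∘ ρ, hcomp σ hσ ρ hρ, ?_⟩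
      have h1' : Reach (σ (ρ a)) (σ (ρ b)) := hmap σ hσ _ _ h1
      have h2' : Reach (ρ (σ b)) (ρ (σ c)) := hmap ρ hρ _ _ h2
      have e : ρ (σ b) = σ (ρ b) := congrFun (hcomm ρ hρ σ hσ) b
      have e2 : ρ (σ c) = σ (ρ c) := congrFun (hcomm ρ hρ σ hσ) c
      rw [e, e2] at h2'
      exact Relation.ReflTransGen.trans h1' h2'
    have hr'inv : ∀ ω, ω ∈ M → ∀ a b, (r' a b ↔ r' (ω a) (ω b)) := by
      intro ω hω a b
      constructor
      · rintro ⟨ρ, hρ, h⟩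
        refine ⟨ρ, hρ, ?_⟩
        have h' : Reach (ω (ρ a)) (ω (ρ b)) := hmap ω hω _ _ h
        have ea : ω (ρ a) = ρ (ω a) := congrFun (hcomm ω hω ρ hρ) a
        have eb : ω (ρ b) = ρ (ω b) := congrFun (hcomm ω hω ρ hρ) b
        rwa [ea, eb] at h'
      · rintro ⟨ρ, hρ, h⟩
        exact ⟨ρ ∘ ω, hcomp ρ hρ ω hω, h⟩
    have hr'sinv : ∀ ω ∈ M, ∀ a b, (r' a b ↔ r' (ω a) (ω b)) ∧
        ((r' a b ∧ ¬ r' b a) ↔ (r' (ω a) (ω b) ∧ ¬ r' (ω b) (ω a))) := by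
      intro ω hω a b
      refine ⟨hr'inv ω hω a b, ?_, ?_⟩
      · rintro ⟨h1, h2⟩
        exact ⟨(hr'inv ω hω a b).mp h1, fun hc => h2 ((hr'inv ω hω b a).mpr hc)⟩
      · rintro ⟨h1, h2⟩
        exact ⟨(hr'inv ω hω a b).mpr h1, fun hc => h2 ((hr'inv ω hω b a).mp hc)⟩
    have hext : ∀ a b, r a b → r' a b := fun a b h =>
      ⟨id, hid, Relation.ReflTransGen.single (Or.inl h)⟩
    have hr'uv : r' u v :=
      ⟨id, hid, Relation.ReflTransGen.single (Or.inr ⟨id, hid, rfl, rfl⟩)⟩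
    by_cases hstr : ∀ p q, r p q → ¬ r q p → ¬ r' q p
    · exfalso
      have hiff := hmax r' hr'refl hr'trans hr'sinv hext
        (fun p q h1 h2 => ⟨hext p q h1, hstr p q h1 h2⟩) u v
      exact huv (hiff.mp hr'uv)
    · push_neg at hstr
      obtain ⟨p, q, hpq, hqp, hqp'⟩ := hstr
      obtain ⟨ρ, hρ, hreach⟩ := hqp'
      set L : (X → X) → (X → X) → Prop :=
        fun ω ω' => ω ∈ M ∧ ω' ∈ M ∧ r (ω v) (ω' u) with hLdef
      have hchar : ∀ a b, Reach a b → r a b ∨ ∃ ω ω', ω ∈ M ∧ ω' ∈ M ∧ r a (ω u) ∧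
          Relation.ReflTransGen L ω ω' ∧ r (ω' v) b := by
        intro a b hab
        induction hab with
        | refl => exact Or.inl (hrefl a)
        | @tail b' c' hab' hbc ih =>
          rcases ih with hr | ⟨ω, ω', hω, hω', h1, hK, h2⟩
          · rcases hbc with hbc | ⟨σ, hσ, hb, hc⟩
            · exact Or.inl (htrans _ _ _ hr hbc)
            · refine Or.inr ⟨σ, σ, hσ, hσ, ?_, Relation.ReflTransGen.refl, ?_⟩
              · rw [← hb]; exact hr
              · rw [hc]; exact hrefl _
          · rcases hbc with hbc | ⟨σ, hσ, hb, hc⟩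
            · exact Or.inr ⟨ω, ω', hω, hω', h1, hK, htrans _ _ _ h2 hbc⟩
            · refine Or.inr ⟨ω, σ, hω, hσ, h1, hK.tail ⟨hω', hσ, ?_⟩, ?_⟩
              · rw [← hb]; exact h2
              · rw [hc]; exact hrefl _
      have hpq' : r (ρ p) (ρ q) := (hsinv ρ hρ p q).1.mp hpq
      rcases hchar _ _ hreach with h | ⟨ω, ω', hω, hω', h1, hK, h2⟩
      · exact absurd ((hsinv ρ hρ q p).1.mpr h) hqp
      · have hwrap : L ω' ω := ⟨hω', hω, htrans _ _ _ h2 (htrans _ _ _ hpq' h1)⟩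
        have hstrict : ¬ r (ω u) (ω' v) := by
          intro hc
          exact hqp ((hsinv ρ hρ q p).1.mpr (htrans _ _ _ h1 (htrans _ _ _ hc h2)))
        obtain ⟨n, hn1, f, hf0, hf1, hflink, hfper⟩ := cycle_periodic L ω ω' hK hwrap
        refine ⟨n, hn1, f, fun i => (hflink i).1, fun i => (hflink i).2.2, hfper, ?_⟩
        rw [hf1, hf0]; exact hstrict
  -- Extract the two cyclic systems
  obtain ⟨n, hn1, α, hαmem, hαlink, hαper, hαstrict⟩ := key x₀ y₀ hxy
  obtain ⟨m, hm1, β, hβmem, hβlink, hβper, _⟩ := key y₀ x₀ hyx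
  have hαperk : ∀ k i, α (i + n * k) = α i := by
    intro k
    induction k with
    | zero => simp
    | succ k ih => intro i; rw [Nat.mul_succ, ← Nat.add_assoc, hαper, ih]
  have hβperk : ∀ k i, β (i + m * k) = β i := by
    intro k
    induction k with
    | zero => simp
    | succ k ih => intro i; rw [Nat.mul_succ, ← Nat.add_assoc, hβper, ih]
  set N : ℕ := n * m with hNdef
  have hN1 : 1 ≤ N := Nat.one_le_iff_ne_zero.mpr (by positivity)
  have hαN : ∀ i, α (i + N) = α i := fun i => hαperk m i
  have hβN : ∀ i, β (i + N) = β i := fun i => by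
    rw [show i + N = i + m * n by rw [hNdef]; ring]; exact hβperk n i
  -- The interleaved chain
  have chain : ∀ k, r (α 1 (β 1 x₀)) (α (k+1) (β (k+1) x₀)) := by
    intro k
    induction k with
    | zero => exact hrefl _
    | succ k ih =>
      have h1 : r (α (k+1) (β (k+1) x₀)) (α (k+1) (β (k+2) y₀)) :=
        (hsinv (α (k+1)) (hαmem (k+1)) _ _).1.mp (hβlink (k+1))
      have h2 : r (β (k+2) (α (k+1) y₀)) (β (k+2) (α (k+2) x₀)) :=
        (hsinv (β (k+2)) (hβmem (k+2)) _ _).1.mp (hαlink (k+1))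
      have e1 : α (k+1) (β (k+2) y₀) = β (k+2) (α (k+1) y₀) :=
        congrFun (hcomm _ (hαmem _) _ (hβmem _)) y₀
      have e2 : β (k+2) (α (k+2) x₀) = α (k+2) (β (k+2) x₀) :=
        congrFun (hcomm _ (hβmem _) _ (hαmem _)) x₀
      exact htrans _ _ _ ih (htrans _ _ _ (e1 ▸ h1) (e2 ▸ h2))
  have hZ : r (α 1 (β 1 x₀)) (α N (β N x₀)) := by
    have := chain (N - 1)
    rwa [show N - 1 + 1 = N by omega] at this
  have h1 : r (α N (β N x₀)) (α N (β (N+1) y₀)) :=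
    (hsinv (α N) (hαmem N) _ _).1.mp (hβlink N)
  have eα : α N = α 0 := by have := hαN 0; rwa [Nat.zero_add] at this
  have eβ : β (N+1) = β 1 := by have := hβN 1; rwa [Nat.add_comm] at this
  have e3 : α N (β (N+1) y₀) = β 1 (α 0 y₀) := by
    rw [eα, eβ]; exact congrFun (hcomm _ (hαmem 0) _ (hβmem 1)) y₀
  have hbig : r (α 1 (β 1 x₀)) (β 1 (α 0 y₀)) := htrans _ _ _ hZ (e3 ▸ h1)
  have hstrictlift := (hsinv (β 1) (hβmem 1) (α 0 y₀) (α 1 x₀)).2.mp ⟨hαlink 0, hαstrict⟩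
  have e4 : α 1 (β 1 x₀) = β 1 (α 1 x₀) := congrFun (hcomm _ (hαmem 1) _ (hβmem 1)) x₀
  exact hstrictlift.2 (e4 ▸ hbig)
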